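/- Suppose f_i : ℝⁿ×ℝⁿ → ℝ, i = 1..M, are continuously differentiable, f(y) = max_i f_i(y), and Δ > 0. If y* is a Δ-stationary point, i.e. for every unit direction d one has max_{i ∈ R_Δ(y*)} ⟨∇f_i(y*), d⟩ ≥ 0 where R_Δ(y*) = {i : f(y*) − f_i(y*) ≤ Δ}, and each f_i with i ∈ R_Δ(y*) is convex, then f(y*) − inf_{y ∈ ℝⁿ×ℝⁿ} f(y) ≤ Δ. -/

import Mathlib

/-- Gradient inequality for convex differentiable functions. -/
theorem convex_fderiv_le {E : Type*} [NormedAddCommGroup E] [NormedSpace ℝ E]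
    {g : E → ℝ} (hg : ConvexOn ℝ Set.univ g) (hd : Differentiable ℝ g)
    (y w : E) : fderiv ℝ g y (w - y) ≤ g w - g y := by
  set φ : ℝ → ℝ := fun t => g (y + t • (w - y)) with hφ
  have hcurve : HasDerivAt (fun s : ℝ => y + s • (w - y)) (w - y) 0 := by
    simpa using ((hasDerivAt_id (0:ℝ)).smul_const (w - y)).const_add y
  have hfd : HasFDerivAt g (fderiv ℝ g y) (y + (0:ℝ) • (w - y)) := by
    simpa using (hd y).hasFDerivAt
  have hder : HasDerivAt φ (fderiv ℝ g y (w - y)) 0 := hfd.comp_hasDerivAt 0 hcurve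
  have hslope : Filter.Tendsto (fun t : ℝ => (φ t - φ 0) / t) (nhdsWithin 0 (Set.Ioi 0))
      (nhds (fderiv ℝ g y (w - y))) := by
    have h := (hasDerivAt_iff_tendsto_slope.mp hder).mono_left
      (nhdsWithin_mono 0 (fun x hx => ne_of_gt hx))
    have : (slope φ 0) = fun t : ℝ => (φ t - φ 0) / t := by
      funext t; simp [slope_def_field]
    rwa [this] at h
  refine le_of_tendsto hslope ?_
  filter_upwards [Ioo_mem_nhdsGT (by norm_num : (0:ℝ) < 1)] with t ht
  have e : y + t • (w - y) = (1 - t) • y + t • w := by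
    rw [smul_sub, sub_smul, one_smul]; abel
  have h1 : φ t ≤ (1 - t) * g y + t * g w := by
    have h2 := hg.2 (Set.mem_univ y) (Set.mem_univ w) (by linarith [ht.2] : (0:ℝ) ≤ 1 - t)
      (le_of_lt ht.1) (by ring)
    simpa [φ, e, smul_eq_mul] using h2
  have h0 : φ 0 = g y := by simp [φ]
  rw [div_le_iff₀ ht.1]
  nlinarith [h1, h0]

/-- If `y` is a `Δ`-stationary point of `f = max_i f_i` (for every unit direction some
`Δ`-active index has nonnegative directional derivative) and the `Δ`-active `f_i` are
convex, then `f(y) − inf f ≤ Δ`. -/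
theorem delta_stationary_near_min (n M : ℕ) [NeZero M]
    (f : Fin M → (EuclideanSpace ℝ (Fin n) × EuclideanSpace ℝ (Fin n)) → ℝ)
    (hf : ∀ i, ContDiff ℝ 1 (f i)) (Δ : ℝ) (hΔ : 0 < Δ)
    (y : EuclideanSpace ℝ (Fin n) × EuclideanSpace ℝ (Fin n))
    (hconv : ∀ i, Finset.univ.sup' Finset.univ_nonempty (fun k => f k y) - f i y ≤ Δ →
      ConvexOn ℝ Set.univ (f i))
    (hbdd : BddBelow (Set.range fun w => Finset.univ.sup' Finset.univ_nonempty
      (fun k => f k w)))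
    (hstat : ∀ d : EuclideanSpace ℝ (Fin n) × EuclideanSpace ℝ (Fin n), ‖d‖ = 1 →
      ∃ i, Finset.univ.sup' Finset.univ_nonempty (fun k => f k y) - f i y ≤ Δ ∧
        0 ≤ fderiv ℝ (f i) y d) :
    Finset.univ.sup' Finset.univ_nonempty (fun k => f k y) -
      sInf (Set.range fun w => Finset.univ.sup' Finset.univ_nonempty (fun k => f k w)) ≤
      Δ := by
  set F : (EuclideanSpace ℝ (Fin n) × EuclideanSpace ℝ (Fin n)) → ℝ :=
    fun w => Finset.univ.sup' Finset.univ_nonempty (fun k => f k w) with hF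
  have key : ∀ w, F y - Δ ≤ F w := by
    intro w
    by_cases hwy : w = y
    · subst hwy; linarith
    · have hne : w - y ≠ 0 := sub_ne_zero.mpr hwy
      have hnorm : ‖w - y‖ ≠ 0 := norm_ne_zero_iff.mpr hne
      set d := ‖w - y‖⁻¹ • (w - y) with hd
      have hdnorm : ‖d‖ = 1 := by
        rw [hd, norm_smul, norm_inv, norm_norm, inv_mul_cancel₀ hnorm]
      obtain ⟨i, hact, hpos⟩ := hstat d hdnorm
      have hdiff : Differentiable ℝ (f i) := (hf i).differentiable one_ne_zero
      have hci : ConvexOn ℝ Set.univ (f i) := hconv i hact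
      have hlin : fderiv ℝ (f i) y (w - y) = ‖w - y‖ * fderiv ℝ (f i) y d := by
        rw [hd, map_smul, smul_eq_mul, ← mul_assoc, mul_inv_cancel₀ hnorm, one_mul]
      have h1 : 0 ≤ fderiv ℝ (f i) y (w - y) := by
        rw [hlin]; positivity
      have h2 := convex_fderiv_le hci hdiff y w
      have h3 : f i y ≤ f i w := by linarith
      have h4 : f i w ≤ F w := Finset.le_sup' (fun k => f k w) (Finset.mem_univ i)
      linarith
  have hle : F y - Δ ≤ sInf (Set.range F) := by
    apply le_csInf (Set.range_nonempty F)
    rintro b ⟨w, rfl⟩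
    exact key w
  linarith
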